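/- arXiv:2005.01100 — 2 statements merged into one kernel-verified Lean document; each statement's English description precedes it below -/
import Mathlib

section
/- Let a, b > -1, c ≥ 0, and define the sequence (u_k) by u_0 = 1 and u_k = (1/(2c+a+b+k+1))·((a+k) u_{k-1} + c Σ_{i=0}^{k-1} u_i u_{k-1-i} - c Σ_{j=1}^{k-1} u_j u_{k-j}) for k ≥ 1. Then 0 < u_k ≤ 1 for all k, and the sequence (u_k) is non-increasing. -/
/-- The sequence `(u_k)` of moments of the limiting measure `ν_{a,b,c}` satisfies
`0 < u_k ≤ 1` and is non-increasing. -/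
theorem limiting_moments_bounds (a b c : ℝ) (ha : -1 < a) (hb : -1 < b) (hc : 0 ≤ c)
    (u : ℕ → ℝ) (hu0 : u 0 = 1)
    (hurec : ∀ k : ℕ, 1 ≤ k →
      u k = (1 / (2*c + a + b + (k : ℝ) + 1)) *
        ((a + (k : ℝ)) * u (k - 1)
          + c * ∑ i ∈ Finset.range k, u i * u (k - 1 - i)
          - c * ∑ j ∈ Finset.Icc 1 (k - 1), u j * u (k - j))) :
    (∀ k : ℕ, 0 < u k ∧ u k ≤ 1) ∧ (∀ k l : ℕ, k ≤ l → u l ≤ u k) := by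
  -- `p k` is the full convolution sum appearing in the recurrence
  have hIcc : ∀ (n : ℕ) (f : ℕ → ℝ),
      ∑ j ∈ Finset.Icc 1 n, f j = ∑ i ∈ Finset.range n, f (i+1) := by
    intro n f
    rw [← Finset.Ico_add_one_right_eq_Icc, Finset.sum_Ico_eq_sum_range]
    refine Finset.sum_congr (by rw [Nat.add_sub_cancel]) (fun i _ => by rw [Nat.add_comm])
  set p : ℕ → ℝ := fun k => ∑ i ∈ Finset.range k, u i * u (k - 1 - i) with hp
  have hps : ∀ n : ℕ, p (n+1) = (∑ i ∈ Finset.range n, u i * u (n-i)) + u n := by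
    intro n
    show (∑ i ∈ Finset.range (n+1), u i * u (n-i)) = _
    rw [Finset.sum_range_succ, show n-n = 0 from by omega, hu0, mul_one]
  have hq : ∀ n : ℕ, ∑ j ∈ Finset.Icc 1 n, u j * u (n+1-j) = p (n+2) - 2 * u (n+1) := by
    intro n
    rw [hIcc n (fun j => u j * u (n+1-j))]
    have h1 : p (n+2) = (∑ i ∈ Finset.range (n+1), u i * u (n+1-i)) + u (n+1) := hps (n+1)
    have h2 : (∑ i ∈ Finset.range (n+1), u i * u (n+1-i))
        = (∑ i ∈ Finset.range n, u (i+1) * u (n-i)) + u (n+1) := by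
      rw [Finset.sum_range_succ']
      congr 1
      · exact Finset.sum_congr rfl fun i hi => by
          have : n + 1 - (i+1) = n - i := by omega
          rw [this]
      · simp [hu0]
    have h3 : (∑ i ∈ Finset.range n, u (i+1) * u (n+1-(i+1)))
        = ∑ i ∈ Finset.range n, u (i+1) * u (n-i) := by
      exact Finset.sum_congr rfl fun i hi => by
        have : n + 1 - (i+1) = n - i := by omega
        rw [this]
    rw [h3]
    linarith
  have hDpos : ∀ n : ℕ, (0:ℝ) < 2*c + a + b + ((n:ℝ)+1) + 1 := by
    intro n
    have : (0:ℝ) ≤ (n:ℝ) := Nat.cast_nonneg n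
    linarith
  -- the clean form of the recurrence
  have hR : ∀ n : ℕ, (a+b+(n:ℝ)+2) * u (n+1)
      = (a+(n:ℝ)+1) * u n + c * (p (n+1) - p (n+2)) := by
    intro n
    have hk := hurec (n+1) (Nat.le_add_left 1 n)
    rw [show n+1-1 = n from rfl] at hk
    push_cast at hk
    have hS : (∑ i ∈ Finset.range (n+1), u i * u (n - i)) = p (n+1) := rfl
    rw [hS] at hk
    have hD := hDpos n
    have h5 : (2*c + a + b + ((n:ℝ)+1) + 1) * u (n+1)
        = (a + ((n:ℝ)+1)) * u n + c * p (n+1)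
          - c * ∑ j ∈ Finset.Icc 1 n, u j * u (n+1-j) := by
      rw [hk, ← mul_assoc, mul_one_div, div_self (ne_of_gt hD), one_mul]
    rw [hq n] at h5
    linear_combination h5
  -- the key identity for the differences
  have hE : ∀ n : ℕ, ∑ j ∈ Finset.Icc 1 (n+1), (u (j-1) - u j) * (u (n+1-j) - u (n+2-j))
      = p (n+1) - 2 * p (n+2) + p (n+3) + 2*(u (n+1) - u (n+2)) := by
    intro n
    have key : ∑ j ∈ Finset.Icc 1 (n+1), (u (j-1) - u j) * (u (n+1-j) - u (n+2-j))
        = ∑ i ∈ Finset.range (n+1), (u i - u (i+1)) * (u (n-i) - u (n+1-i)) := by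
      rw [hIcc (n+1) (fun j => (u (j-1) - u j) * (u (n+1-j) - u (n+2-j)))]
      refine Finset.sum_congr rfl fun i hi => ?_
      have e1 : i+1-1 = i := by omega
      have e2 : n+1-(i+1) = n-i := by omega
      have e3 : n+2-(i+1) = n+1-i := by omega
      rw [e1, e2, e3]
    rw [key]
    have hA : (∑ i ∈ Finset.range (n+1), u i * u (n-i)) = p (n+1) := rfl
    have hB : (∑ i ∈ Finset.range (n+1), u i * u (n+1-i)) = p (n+2) - u (n+1) := by
      have := hps (n+1); linarith
    have hC : (∑ i ∈ Finset.range (n+1), u (i+1) * u (n-i)) = p (n+2) - u (n+1) := by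
      have h1 : (∑ i ∈ Finset.range (n+1), u (i+1) * u (n+1-(i+1)))
          = ∑ i ∈ Finset.range (n+1), u (i+1) * u (n-i) := by
        refine Finset.sum_congr rfl fun i hi => ?_
        have : n+1-(i+1) = n-i := by omega
        rw [this]
      rw [← h1, ← hIcc (n+1) (fun j => u j * u (n+1-j)),
        Finset.sum_Icc_succ_top (by omega) (fun j => u j * u (n+1-j)), hq n]
      have : n+1-(n+1) = 0 := by omega
      rw [this, hu0, mul_one]
      ring
    have hD : (∑ i ∈ Finset.range (n+1), u (i+1) * u (n+1-i)) = p (n+3) - 2 * u (n+2) := by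
      have h1 : (∑ i ∈ Finset.range (n+1), u (i+1) * u (n+2-(i+1)))
          = ∑ i ∈ Finset.range (n+1), u (i+1) * u (n+1-i) := by
        refine Finset.sum_congr rfl fun i hi => ?_
        have : n+2-(i+1) = n+1-i := by omega
        rw [this]
      rw [← h1, ← hIcc (n+1) (fun j => u j * u (n+2-j))]
      exact hq (n+1)
    simp only [sub_mul, mul_sub, Finset.sum_sub_distrib]
    rw [hA, hB, hC, hD]
    ring
  -- the recurrence for the differences
  have he : ∀ n : ℕ, (2*c+a+b+(n:ℝ)+3) * (u (n+1) - u (n+2))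
      = (a+(n:ℝ)+1)*(u n - u (n+1))
        + c * ∑ j ∈ Finset.Icc 1 (n+1), (u (j-1) - u j) * (u (n+1-j) - u (n+2-j)) := by
    intro n
    have h1 := hR n
    have h2 := hR (n+1)
    rw [show n+1+1 = n+2 from rfl, show n+1+2 = n+3 from rfl] at h2
    push_cast at h2
    linear_combination h1 - h2 - c * hE n
  -- monotonicity at consecutive indices
  have hmono1 : ∀ n : ℕ, 0 ≤ u n - u (n+1) := by
    intro n
    induction n using Nat.strong_induction_on with
    | _ n ih =>
      cases n with
      | zero =>
        show (0:ℝ) ≤ u 0 - u 1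
        have h1 := hurec 1 le_rfl
        rw [show (1:ℕ)-1 = 0 from rfl] at h1
        push_cast at h1
        have hs1 : ∑ i ∈ Finset.range 1, u i * u (0-i) = 1 := by simp [hu0]
        have hs2 : ∑ j ∈ Finset.Icc 1 0, u j * u (1-j) = 0 := by simp
        rw [hs1, hs2, hu0] at h1
        have hD : (0:ℝ) < 2*c+a+b+1+1 := by linarith
        rw [hu0, h1, sub_nonneg, one_div_mul_eq_div, div_le_one hD]
        linarith
      | succ m =>
        show (0:ℝ) ≤ u (m+1) - u (m+2)
        have hrec := he m
        have hsum : 0 ≤ ∑ j ∈ Finset.Icc 1 (m+1), (u (j-1) - u j) * (u (m+1-j) - u (m+2-j)) := by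
          refine Finset.sum_nonneg fun j hj => ?_
          simp only [Finset.mem_Icc] at hj
          obtain ⟨hj1, hj2⟩ := hj
          have h1 : 0 ≤ u (j-1) - u j := by
            have := ih (j-1) (by omega)
            have ej : j - 1 + 1 = j := by omega
            rwa [ej] at this
          have h2 : 0 ≤ u (m+1-j) - u (m+2-j) := by
            have := ih (m+1-j) (by omega)
            have ej : m+1-j+1 = m+2-j := by omega
            rwa [ej] at this
          exact mul_nonneg h1 h2
        have hek : 0 ≤ u m - u (m+1) := ih m (by omega)
        have hm0 : (0:ℝ) ≤ (m:ℝ) := Nat.cast_nonneg m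
        have ham : (0:ℝ) ≤ a + (m:ℝ) + 1 := by linarith
        have hD : (0:ℝ) < 2*c+a+b+(m:ℝ)+3 := by linarith
        nlinarith [mul_nonneg hc hsum, mul_nonneg ham hek]
  -- positivity
  have hpos : ∀ n : ℕ, 0 < u n := by
    intro n
    induction n using Nat.strong_induction_on with
    | _ n ih =>
      cases n with
      | zero => show (0:ℝ) < u 0; rw [hu0]; norm_num
      | succ m =>
        show (0:ℝ) < u (m+1)
        have hk := hurec (m+1) (Nat.le_add_left 1 m)
        rw [show m+1-1 = m from rfl] at hk
        push_cast at hk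
        have hD := hDpos m
        have hPQ : (∑ i ∈ Finset.range (m+1), u i * u (m-i))
            - (∑ j ∈ Finset.Icc 1 m, u j * u (m+1-j))
            = u m + ∑ i ∈ Finset.range m, (u i - u (i+1)) * u (m-i) := by
          rw [Finset.sum_range_succ, hIcc m (fun j => u j * u (m+1-j))]
          have e1 : m - m = 0 := by omega
          rw [e1, hu0, mul_one]
          have e2 : (∑ i ∈ Finset.range m, u (i+1) * u (m+1-(i+1)))
              = ∑ i ∈ Finset.range m, u (i+1) * u (m-i) := by
            refine Finset.sum_congr rfl fun i hi => ?_
            have : m+1-(i+1) = m-i := by omega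
            rw [this]
          rw [e2]
          simp only [sub_mul, Finset.sum_sub_distrib]
          ring
        have hsum : 0 ≤ ∑ i ∈ Finset.range m, (u i - u (i+1)) * u (m-i) :=
          Finset.sum_nonneg fun i hi =>
            mul_nonneg (hmono1 i) (le_of_lt (ih (m-i) (by omega)))
        have hum : 0 < u m := ih m (by omega)
        have hm0 : (0:ℝ) ≤ (m:ℝ) := Nat.cast_nonneg m
        have ham : (0:ℝ) < a + ((m:ℝ)+1) := by linarith
        rw [hk]
        apply mul_pos (one_div_pos.mpr hD)
        have h6 : c * (∑ i ∈ Finset.range (m+1), u i * u (m-i))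
            - c * (∑ j ∈ Finset.Icc 1 m, u j * u (m+1-j))
            = c * (u m + ∑ i ∈ Finset.range m, (u i - u (i+1)) * u (m-i)) := by
          rw [← mul_sub, hPQ]
        have h7 : 0 ≤ c * (u m + ∑ i ∈ Finset.range m, (u i - u (i+1)) * u (m-i)) :=
          mul_nonneg hc (by linarith)
        nlinarith [mul_pos ham hum]
  have hanti : Antitone u := antitone_nat_of_succ_le fun n => by linarith [hmono1 n]
  refine ⟨fun k => ⟨hpos k, ?_⟩, fun k l h => hanti h⟩
  calc u k ≤ u 0 := hanti (Nat.zero_le k)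
    _ = 1 := hu0
end

section
/- Let c ≥ 0, a, b > -1 with c+a > 0, c+b > 0, and let ζ_n = (μ_1⋯μ_n/(λ̂_0 λ_1⋯λ_{n-1}))^{1/2} · (c+a+1)_n/(c+1)_n, where λ̂_0 = (c+a+1)/(2c+a+b+2), λ_n = ((n+c+a+1)/(2n+2c+a+b+2))·((n+c+a+b+1)/(2n+2c+a+b+1)), μ_n = ((n+c)/(2n+2c+a+b+1))·((n+c+b)/(2n+2c+a+b)). Then √(2n)·ζ_n → (Γ(c+1)Γ(c+a+b+2)/(Γ(c+a+1)Γ(c+b+1)))^{1/2} as n → ∞. -/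
open Filter Topology

/-- The coefficient `λ_n(c)` of associated Jacobi polynomials. -/
noncomputable def lamJ (a b c : ℝ) (n : ℕ) : ℝ :=
  (((n : ℝ) + c + a + 1) / (2*(n : ℝ) + 2*c + a + b + 2)) *
    (((n : ℝ) + c + a + b + 1) / (2*(n : ℝ) + 2*c + a + b + 1))

/-- The coefficient `μ_n(c)` of associated Jacobi polynomials. -/
noncomputable def muJ (a b c : ℝ) (n : ℕ) : ℝ :=
  (((n : ℝ) + c) / (2*(n : ℝ) + 2*c + a + b + 1)) *
    (((n : ℝ) + c + b) / (2*(n : ℝ) + 2*c + a + b))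

/-- The modified coefficient `λ̂_0(c)`. -/
noncomputable def hatLam0 (a b c : ℝ) : ℝ := (c + a + 1) / (2*c + a + b + 2)

/-- The norm `ζ_n = (μ_1⋯μ_n / (λ̂_0 λ_1⋯λ_{n-1}))^{1/2} · (c+a+1)_n/(c+1)_n`. -/
noncomputable def zetaJ (a b c : ℝ) (n : ℕ) : ℝ :=
  Real.sqrt ((∏ i ∈ Finset.Icc 1 n, muJ a b c i) /
      (hatLam0 a b c * ∏ i ∈ Finset.Ico 1 n, lamJ a b c i)) *
    ((ascPochhammer ℝ n).eval (c + a + 1) / (ascPochhammer ℝ n).eval (c + 1))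

lemma poch_prod (x : ℝ) (n : ℕ) :
    (ascPochhammer ℝ n).eval x = ∏ j ∈ Finset.range n, (x + j) := by
  induction n with
  | zero => simp
  | succ n ih => rw [ascPochhammer_succ_eval, Finset.prod_range_succ, ih]

lemma GammaSeq_eq (x : ℝ) (n : ℕ) :
    Real.GammaSeq x n = (n:ℝ)^x * (n.factorial : ℝ) /
      ((∏ j ∈ Finset.range n, (x + j)) * (x + n)) := by
  rw [Real.GammaSeq, Finset.prod_range_succ]

lemma lin_ratio (α β : ℝ) : Tendsto (fun n : ℕ => ((n:ℝ) + α)/((n:ℝ) + β)) atTop (𝓝 1) := by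
  have h : ∀ᶠ n : ℕ in atTop, (1 + α/(n:ℝ))/(1 + β/(n:ℝ)) = ((n:ℝ) + α)/((n:ℝ) + β) := by
    filter_upwards [eventually_ge_atTop 1] with n hn
    have hn0 : (n:ℝ) ≠ 0 := by positivity
    have h1 : 1 + α/(n:ℝ) = ((n:ℝ)+α)/n := by field_simp
    have h2 : 1 + β/(n:ℝ) = ((n:ℝ)+β)/n := by field_simp
    rw [h1, h2, div_div_div_cancel_right₀ hn0]
  have := ((tendsto_const_nhds.add (tendsto_const_div_atTop_nhds_zero_nat α)).div
      (tendsto_const_nhds.add (tendsto_const_div_atTop_nhds_zero_nat β)) (by norm_num)).congr' h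
  simpa using this

lemma ratio_eq (a b c : ℝ) (ha : -1 < a) (hb : -1 < b) (hc : 0 ≤ c)
    (hca : 0 < c + a) (hcb : 0 < c + b) (m : ℕ) :
    (∏ i ∈ Finset.Icc 1 (m+1), muJ a b c i) /
      (hatLam0 a b c * ∏ i ∈ Finset.Ico 1 (m+1), lamJ a b c i)
    = ((∏ j ∈ Finset.range (m+1), (c + 1 + j)) * (∏ j ∈ Finset.range (m+1), (c + b + 1 + j))) /
      ((∏ j ∈ Finset.range (m+1), (c + a + 1 + j)) * (∏ j ∈ Finset.range m, (c + a + b + 2 + j)) *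
        (2*(m+1 : ℝ) + 2*c + a + b + 1)) := by
  have hab : 0 < 2*c + a + b := by linarith
  induction m with
  | zero =>
      rw [Finset.Icc_self, Finset.prod_singleton, Finset.Ico_self, Finset.prod_empty,
        muJ, hatLam0]
      simp only [zero_add, Finset.prod_range_one, Finset.prod_range_zero, Nat.cast_zero, Nat.cast_one]
      have h1 : (0:ℝ) < 2 + 2*c + a + b + 1 := by linarith
      have h2 : (0:ℝ) < 2 + 2*c + a + b := by linarith
      have h3 : (0:ℝ) < 2*c + a + b + 2 := by linarith
      have h4 : (0:ℝ) < c + a + 1 := by linarith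
      field_simp
      rw [div_eq_div_iff (ne_of_gt (by apply mul_pos <;> linarith)) (ne_of_gt (by linarith))]
      ring
  | succ m ih =>
      rw [Finset.prod_Icc_succ_top (by omega), Finset.prod_Ico_succ_top (by omega),
        Finset.prod_range_succ, Finset.prod_range_succ (f := fun j => c + b + 1 + (j:ℝ)),
        Finset.prod_range_succ (f := fun j => c + a + 1 + (j:ℝ)),
        Finset.prod_range_succ (f := fun j => c + a + b + 2 + (j:ℝ))]
      have key : (∏ i ∈ Finset.Icc 1 (m+1), muJ a b c i) * muJ a b c (m+1+1) /
          (hatLam0 a b c * ((∏ i ∈ Finset.Ico 1 (m+1), lamJ a b c i) * lamJ a b c (m+1)))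
          = ((∏ i ∈ Finset.Icc 1 (m+1), muJ a b c i) /
            (hatLam0 a b c * ∏ i ∈ Finset.Ico 1 (m+1), lamJ a b c i)) *
            (muJ a b c (m+1+1) / lamJ a b c (m+1)) := by
        rw [div_mul_div_comm, mul_assoc]
      have hm0 : (0:ℝ) ≤ (m:ℝ) := Nat.cast_nonneg m
      have h1 : (0:ℝ) < 2*((m:ℝ)+1) + 2*c + a + b + 1 := by linarith
      have h2 : (0:ℝ) < 2*((m:ℝ)+2) + 2*c + a + b + 1 := by linarith
      have h3 : (0:ℝ) < 2*((m:ℝ)+2) + 2*c + a + b := by linarith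
      have h4 : (0:ℝ) < (m:ℝ)+1 + c + a + 1 := by linarith
      have h5 : (0:ℝ) < 2*((m:ℝ)+1) + 2*c + a + b + 2 := by linarith
      have h6 : (0:ℝ) < (m:ℝ)+1 + c + a + b + 1 := by linarith
      have h7 : (0:ℝ) < 2*((m:ℝ)+1+1) + 2*c + a + b + 1 := by linarith
      have h8 : (0:ℝ) < c + a + 1 + ((m:ℝ)+1) := by linarith
      have h9 : (0:ℝ) < c + a + b + 2 + (m:ℝ) := by linarith
      have hmu : muJ a b c (m+1+1) / lamJ a b c (m+1) =
          ((c + 1 + ((m:ℝ)+1)) * (c + b + 1 + ((m:ℝ)+1)) * (2*((m:ℝ)+1) + 2*c + a + b + 1)) /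
          ((c + a + 1 + ((m:ℝ)+1)) * (c + a + b + 2 + (m:ℝ)) *
            (2*((m:ℝ)+1+1) + 2*c + a + b + 1)) := by
        rw [muJ, lamJ]
        push_cast
        rw [div_mul_div_comm, div_mul_div_comm, div_div_div_eq,
          div_eq_div_iff
            (by apply ne_of_gt; repeat' apply mul_pos
                all_goals linarith)
            (by apply ne_of_gt; repeat' apply mul_pos
                all_goals linarith)]
        ring
      have p1 : (0:ℝ) < ∏ j ∈ Finset.range (m+1), (c + 1 + j) :=
        Finset.prod_pos (fun j _ => by have := (Nat.cast_nonneg j : (0:ℝ) ≤ j); linarith)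
      have p2 : (0:ℝ) < ∏ j ∈ Finset.range (m+1), (c + b + 1 + j) :=
        Finset.prod_pos (fun j _ => by have := (Nat.cast_nonneg j : (0:ℝ) ≤ j); linarith)
      have p3 : (0:ℝ) < ∏ j ∈ Finset.range (m+1), (c + a + 1 + j) :=
        Finset.prod_pos (fun j _ => by have := (Nat.cast_nonneg j : (0:ℝ) ≤ j); linarith)
      have p4 : (0:ℝ) < ∏ j ∈ Finset.range m, (c + a + b + 2 + j) :=
        Finset.prod_pos (fun j _ => by have := (Nat.cast_nonneg j : (0:ℝ) ≤ j); linarith)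
      rw [key, ih, hmu, div_mul_div_comm]
      push_cast
      rw [div_eq_div_iff
            (by apply ne_of_gt; repeat' apply mul_pos
                all_goals first | exact p1 | exact p2 | exact p3 | exact p4 | linarith)
            (by apply ne_of_gt; repeat' apply mul_pos
                all_goals first | exact p1 | exact p2 | exact p3 | exact p4 | linarith)]
      ring

lemma Fval (p q r t Z : ℝ) (hp : 0 < p) (hq : 0 < q) (hr : 0 < r) (ht : 0 < t) (hZ : 0 < Z)
    (hsum : r + t = p + q + 1) (m : ℕ) :
    (2*(((m+1:ℕ):ℝ) + t - 1)/Z) *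
      (Real.GammaSeq r (m+1) * Real.GammaSeq t (m+1) /
        (Real.GammaSeq p (m+1) * Real.GammaSeq q (m+1))) *
      ((r+((m+1:ℕ):ℝ))*(t+((m+1:ℕ):ℝ))/((p+((m+1:ℕ):ℝ))*(q+((m+1:ℕ):ℝ))))
    = 2*((m+1:ℕ):ℝ) * ((∏ j ∈ Finset.range (m+1), (r+j)) * (∏ j ∈ Finset.range (m+1), (q+j)) /
        ((∏ j ∈ Finset.range (m+1), (p+j)) * (∏ j ∈ Finset.range m, (t+j)) * Z)) *
        ((∏ j ∈ Finset.range (m+1), (p+j)) / (∏ j ∈ Finset.range (m+1), (r+j)))^2 := by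
  have hN : (0:ℝ) < ((m+1:ℕ):ℝ) := by positivity
  have hqpow : ((m+1:ℕ):ℝ)^q = ((m+1:ℕ):ℝ)^r * ((m+1:ℕ):ℝ)^t / (((m+1:ℕ):ℝ)^p * ((m+1:ℕ):ℝ)) := by
    have hq' : q = r + t - (p + 1) := by linarith
    rw [hq', Real.rpow_sub hN, Real.rpow_add hN, Real.rpow_add hN, Real.rpow_one]
  rw [GammaSeq_eq, GammaSeq_eq, GammaSeq_eq, GammaSeq_eq, hqpow,
    Finset.prod_range_succ (f := fun j => t + (j:ℝ))]
  have Pp : (0:ℝ) < ∏ j ∈ Finset.range (m+1), (p+j) :=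
    Finset.prod_pos (fun j _ => by have := (Nat.cast_nonneg j : (0:ℝ) ≤ j); linarith)
  have Pq : (0:ℝ) < ∏ j ∈ Finset.range (m+1), (q+j) :=
    Finset.prod_pos (fun j _ => by have := (Nat.cast_nonneg j : (0:ℝ) ≤ j); linarith)
  have Pr : (0:ℝ) < ∏ j ∈ Finset.range (m+1), (r+j) :=
    Finset.prod_pos (fun j _ => by have := (Nat.cast_nonneg j : (0:ℝ) ≤ j); linarith)
  have Pt : (0:ℝ) < ∏ j ∈ Finset.range m, (t+j) :=
    Finset.prod_pos (fun j _ => by have := (Nat.cast_nonneg j : (0:ℝ) ≤ j); linarith)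
  have hrp : (0:ℝ) < ((m+1:ℕ):ℝ)^r := Real.rpow_pos_of_pos hN r
  have htp : (0:ℝ) < ((m+1:ℕ):ℝ)^t := Real.rpow_pos_of_pos hN t
  have hpp : (0:ℝ) < ((m+1:ℕ):ℝ)^p := Real.rpow_pos_of_pos hN p
  have hfac : (0:ℝ) < ((m+1).factorial : ℝ) := by positivity
  have h1 : (0:ℝ) < r + ((m+1:ℕ):ℝ) := by linarith
  have h2 : (0:ℝ) < t + ((m+1:ℕ):ℝ) := by linarith
  have h3 : (0:ℝ) < p + ((m+1:ℕ):ℝ) := by linarith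
  have h4 : (0:ℝ) < q + ((m+1:ℕ):ℝ) := by linarith
  have h5 : (0:ℝ) < t + (m:ℝ) := by have := (Nat.cast_nonneg m : (0:ℝ) ≤ m); linarith
  field_simp
  push_cast
  ring

/-- `√(2n)·ζ_n → (Γ(c+1)Γ(c+a+b+2)/(Γ(c+a+1)Γ(c+b+1)))^{1/2}` as `n → ∞`. -/
theorem zeta_asymptotic (a b c : ℝ) (ha : -1 < a) (hb : -1 < b) (hc : 0 ≤ c)
    (hca : 0 < c + a) (hcb : 0 < c + b) :
    Tendsto (fun n : ℕ => Real.sqrt (2 * (n : ℝ)) * zetaJ a b c n) atTop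
      (𝓝 (Real.sqrt (Real.Gamma (c + 1) * Real.Gamma (c + a + b + 2) /
        (Real.Gamma (c + a + 1) * Real.Gamma (c + b + 1))))) := by
  have hp : (0:ℝ) < c + a + 1 := by linarith
  have hq : (0:ℝ) < c + b + 1 := by linarith
  have hr : (0:ℝ) < c + 1 := by linarith
  have ht : (0:ℝ) < c + a + b + 2 := by linarith
  set F : ℕ → ℝ := fun n =>
    (2*((n:ℝ) + (c+a+b+2) - 1)/(2*(n:ℝ)+2*c+a+b+1)) *
      (Real.GammaSeq (c+1) n * Real.GammaSeq (c+a+b+2) n /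
        (Real.GammaSeq (c+a+1) n * Real.GammaSeq (c+b+1) n)) *
      (((c+1)+(n:ℝ))*((c+a+b+2)+(n:ℝ))/(((c+a+1)+(n:ℝ))*((c+b+1)+(n:ℝ)))) with hFdef
  have T1 : Tendsto (fun n : ℕ => 2*((n:ℝ) + (c+a+b+2) - 1)/(2*(n:ℝ)+2*c+a+b+1)) atTop (𝓝 1) := by
    refine (lin_ratio (c+a+b+1) ((2*c+a+b+1)/2)).congr (fun n => ?_)
    rw [show (n:ℝ)+(c+a+b+1) = 2*((n:ℝ)+(c+a+b+2)-1)/2 by ring,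
        show (n:ℝ)+(2*c+a+b+1)/2 = (2*(n:ℝ)+2*c+a+b+1)/2 by ring,
        div_div_div_cancel_right₀ (two_ne_zero)]
  have T2 : Tendsto (fun n : ℕ => Real.GammaSeq (c+1) n * Real.GammaSeq (c+a+b+2) n /
      (Real.GammaSeq (c+a+1) n * Real.GammaSeq (c+b+1) n)) atTop
      (𝓝 (Real.Gamma (c+1) * Real.Gamma (c+a+b+2) / (Real.Gamma (c+a+1) * Real.Gamma (c+b+1)))) :=
    ((Real.GammaSeq_tendsto_Gamma (c+1)).mul (Real.GammaSeq_tendsto_Gamma (c+a+b+2))).div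
      ((Real.GammaSeq_tendsto_Gamma (c+a+1)).mul (Real.GammaSeq_tendsto_Gamma (c+b+1)))
      (ne_of_gt (mul_pos (Real.Gamma_pos_of_pos hp) (Real.Gamma_pos_of_pos hq)))
  have T3 : Tendsto (fun n : ℕ =>
      ((c+1)+(n:ℝ))*((c+a+b+2)+(n:ℝ))/(((c+a+1)+(n:ℝ))*((c+b+1)+(n:ℝ)))) atTop (𝓝 1) := by
    have := ((lin_ratio (c+1) (c+a+1)).mul (lin_ratio (c+a+b+2) (c+b+1)))
    rw [mul_one] at this
    refine this.congr (fun n => ?_)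
    rw [div_mul_div_comm]
    ring
  have hF : Tendsto F atTop (𝓝 (Real.Gamma (c+1) * Real.Gamma (c+a+b+2) /
      (Real.Gamma (c+a+1) * Real.Gamma (c+b+1)))) := by
    have := (T1.mul T2).mul T3
    rw [one_mul, mul_one] at this
    exact this
  have hsqrt : Tendsto (fun n => Real.sqrt (F n)) atTop
      (𝓝 (Real.sqrt (Real.Gamma (c + 1) * Real.Gamma (c + a + b + 2) /
        (Real.Gamma (c + a + 1) * Real.Gamma (c + b + 1))))) :=
    (Real.continuous_sqrt.tendsto _).comp hF
  refine Tendsto.congr' ?_ hsqrt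
  filter_upwards [eventually_ge_atTop 1] with n hn
  obtain ⟨m, rfl⟩ : ∃ m, n = m + 1 := ⟨n - 1, by omega⟩
  have hm0 : (0:ℝ) ≤ (m:ℝ) := Nat.cast_nonneg m
  have p1 : (0:ℝ) < ∏ j ∈ Finset.range (m+1), (c + 1 + j) :=
    Finset.prod_pos (fun j _ => by have := (Nat.cast_nonneg j : (0:ℝ) ≤ j); linarith)
  have p2 : (0:ℝ) < ∏ j ∈ Finset.range (m+1), (c + b + 1 + j) :=
    Finset.prod_pos (fun j _ => by have := (Nat.cast_nonneg j : (0:ℝ) ≤ j); linarith)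
  have p3 : (0:ℝ) < ∏ j ∈ Finset.range (m+1), (c + a + 1 + j) :=
    Finset.prod_pos (fun j _ => by have := (Nat.cast_nonneg j : (0:ℝ) ≤ j); linarith)
  have p4 : (0:ℝ) < ∏ j ∈ Finset.range m, (c + a + b + 2 + j) :=
    Finset.prod_pos (fun j _ => by have := (Nat.cast_nonneg j : (0:ℝ) ≤ j); linarith)
  have hZ : (0:ℝ) < 2*((m:ℝ)+1) + 2*c + a + b + 1 := by linarith
  have hX : (0:ℝ) ≤ ((∏ j ∈ Finset.range (m+1), (c + 1 + j)) *
      (∏ j ∈ Finset.range (m+1), (c + b + 1 + j))) /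
      ((∏ j ∈ Finset.range (m+1), (c + a + 1 + j)) * (∏ j ∈ Finset.range m, (c + a + b + 2 + j)) *
        (2*((m:ℝ)+1) + 2*c + a + b + 1)) := by positivity
  have hd : (0:ℝ) ≤ (∏ j ∈ Finset.range (m+1), (c + a + 1 + j)) /
      (∏ j ∈ Finset.range (m+1), (c + 1 + j)) := by positivity
  have key := Fval (c+a+1) (c+b+1) (c+1) (c+a+b+2) (2*((m:ℝ)+1) + 2*c + a + b + 1)
    hp hq hr ht hZ (by ring) m
  rw [zetaJ, poch_prod, poch_prod, ratio_eq a b c ha hb hc hca hcb m]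
  push_cast
  push_cast at key hX hd
  rw [← mul_assoc, ← Real.sqrt_mul (by positivity) _, ← Real.sqrt_sq hd]
  rw [← Real.sqrt_mul (mul_nonneg (by positivity) hX)]
  congr 1
  simp only [hFdef]
  push_cast
  exact key
end
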